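/- Let B ⊆ P be a principal coalgebra C-extension of Doi–Koppinen type: H a Hopf algebra with bijective antipode, P a right H-comodule algebra, C a right H-module coalgebra, D a right H-module, π: C → D a right H-linear coalgebra map, e ∈ C group-like with ρ(p) = Σ p₍₀₎ ⊗ e·p₍₁₎, and the canonical Galois map a right P-module homomorphism for the diagonal right action on P ⊗ C. Then with A = P^{co D}_ē and X = C^{co D}_ē, the canonical Galois map restricts to an isomorphism A ⊗_B A ≅ P □_D X. -/

import Mathlib

open TensorProduct

variable (k H C D P : Type) [Field k]
  [Ring H] [HopfAlgebra k H]
  [AddCommGroup C] [Module k C] [Coalgebra k C]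
  [AddCommGroup D] [Module k D] [Coalgebra k D]
  [Ring P] [Algebra k P]

/-- The canonical Galois map `P ⊗ P → P ⊗ C`, `p ⊗ q ↦ p·ρ(q)`. -/
noncomputable def canMap (ρ : P →ₗ[k] P ⊗[k] C) : P ⊗[k] P →ₗ[k] P ⊗[k] C :=
  LinearMap.rTensor C (LinearMap.mul' k P) ∘ₗ
    (TensorProduct.assoc k P P C).symm.toLinearMap ∘ₗ LinearMap.lTensor P ρ

/-- The coinvariants `B = P^{co C}`. -/
def coinv (ρ : P →ₗ[k] P ⊗[k] C) : Set P :=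
  {b : P | ∀ p : P, ρ (b * p) = LinearMap.rTensor C (LinearMap.mulLeft k b) (ρ p)}

/-- The kernel of `P ⊗ₖ P → P ⊗_B P`. -/
def galRel (ρ : P →ₗ[k] P ⊗[k] C) : Submodule k (P ⊗[k] P) :=
  Submodule.span k
    {w : P ⊗[k] P | ∃ p q b : P, b ∈ coinv k C P ρ ∧
      w = (p * b) ⊗ₜ[k] q - p ⊗ₜ[k] (b * q)}

/-- The `ē`-coinvariants `X ⊆ C`. -/
noncomputable def Xsub (π : C →ₗ[k] D) (eb : D) : Submodule k C :=
  LinearMap.ker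
    ((LinearMap.lTensor C π ∘ₗ Coalgebra.comul (R := k) (A := C)) -
      (TensorProduct.mk k C D).flip eb)

/-- The `ē`-coinvariants `A ⊆ P`. -/
noncomputable def Asub (ρ : P →ₗ[k] P ⊗[k] C) (π : C →ₗ[k] D) (eb : D) :
    Submodule k P :=
  LinearMap.ker ((LinearMap.lTensor P π ∘ₗ ρ) - (TensorProduct.mk k P D).flip eb)

/-- The cotensor product `P □_D X`, realised inside `P ⊗ C`. -/
noncomputable def cotenDX (ρ : P →ₗ[k] P ⊗[k] C) (π : C →ₗ[k] D) (eb : D) :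
    Submodule k (P ⊗[k] C) :=
  LinearMap.range (LinearMap.lTensor P (Xsub k C D π eb).subtype) ⊓
    LinearMap.ker
      (((TensorProduct.assoc k P D C).toLinearMap ∘ₗ
          LinearMap.rTensor C (LinearMap.lTensor P π ∘ₗ ρ)) -
        LinearMap.lTensor P
          (LinearMap.rTensor C π ∘ₗ Coalgebra.comul (R := k) (A := C)))

/-- The kernel of `A ⊗ₖ A → A ⊗_B A`. -/
noncomputable def galRelAA (ρ : P →ₗ[k] P ⊗[k] C) (π : C →ₗ[k] D) (eb : D) :
    Submodule k (P ⊗[k] P) :=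
  Submodule.span k
    {w : P ⊗[k] P | ∃ a ∈ Asub k C D P ρ π eb, ∃ b ∈ coinv k C P ρ,
      ∃ a' ∈ Asub k C D P ρ π eb, w = (a * b) ⊗ₜ[k] a' - a ⊗ₜ[k] (b * a')}


section AuxLemmas

set_option linter.unusedSectionVars false

variable {k} {M N Q : Type} [AddCommGroup M] [Module k M] [AddCommGroup N] [Module k N]
  [AddCommGroup Q] [Module k Q]

lemma aux_assoc_symm_tmul (m : M) (z : N ⊗[k] Q) :
    (TensorProduct.assoc k M N Q).symm (m ⊗ₜ[k] z) =
      LinearMap.rTensor Q (TensorProduct.mk k M N m) z := by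
  induction z using TensorProduct.induction_on with
  | zero => simp
  | tmul n q => simp
  | add x y hx hy => simp [tmul_add, hx, hy]

lemma aux_assoc_tmul (W : M ⊗[k] N) (q : Q) :
    (TensorProduct.assoc k M N Q) (W ⊗ₜ[k] q) =
      LinearMap.lTensor M ((TensorProduct.mk k N Q).flip q) W := by
  induction W using TensorProduct.induction_on with
  | zero => simp
  | tmul a b => simp
  | add x y hx hy => simp [add_tmul, hx, hy]

lemma aux_ker_lTensor (g : N →ₗ[k] Q) :
    LinearMap.ker (LinearMap.lTensor M g) =
      LinearMap.range (LinearMap.lTensor M (LinearMap.ker g).subtype) :=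
  LinearMap.exact_iff.mp (Module.Flat.lTensor_exact (R := k) M (LinearMap.exact_subtype_ker_map g))

lemma aux_ker_rTensor (g : N →ₗ[k] Q) :
    LinearMap.ker (LinearMap.rTensor M g) =
      LinearMap.range (LinearMap.rTensor M (LinearMap.ker g).subtype) :=
  LinearMap.exact_iff.mp (Module.Flat.rTensor_exact (R := k) M (LinearMap.exact_subtype_ker_map g))


lemma aux_inter (U V : Submodule k M) {w : M ⊗[k] M}
    (h1 : w ∈ LinearMap.range (LinearMap.rTensor M U.subtype))
    (h2 : w ∈ LinearMap.range (LinearMap.lTensor M V.subtype)) :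
    w ∈ Submodule.span k {x : M ⊗[k] M | ∃ a ∈ U, ∃ b ∈ V, x = a ⊗ₜ[k] b} := by
  obtain ⟨Uc, hUc⟩ := Submodule.exists_isCompl U
  obtain ⟨Vc, hVc⟩ := Submodule.exists_isCompl V
  set rU : M →ₗ[k] U := Submodule.linearProjOfIsCompl U Uc hUc with hrU
  set rV : M →ₗ[k] V := Submodule.linearProjOfIsCompl V Vc hVc with hrV
  obtain ⟨y, hy⟩ := h1
  obtain ⟨z, hz⟩ := h2
  have hstep1 : ∀ y' : U ⊗[k] M,
      TensorProduct.map (U.subtype ∘ₗ rU) (V.subtype ∘ₗ rV)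
          (LinearMap.rTensor M U.subtype y') =
        LinearMap.lTensor M (V.subtype ∘ₗ rV) (LinearMap.rTensor M U.subtype y') := by
    intro y'
    induction y' using TensorProduct.induction_on with
    | zero => simp
    | tmul a b =>
        simp [hrU, Submodule.linearProjOfIsCompl]
    | add x₁ x₂ hx₁ hx₂ => simp only [map_add, hx₁, hx₂]
  have hstep2 : ∀ z' : M ⊗[k] V,
      LinearMap.lTensor M (V.subtype ∘ₗ rV) (LinearMap.lTensor M V.subtype z') =
        LinearMap.lTensor M V.subtype z' := by
    intro z'
    induction z' using TensorProduct.induction_on with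
    | zero => simp
    | tmul a b =>
        simp [hrV, Submodule.linearProjOfIsCompl]
    | add x₁ x₂ hx₁ hx₂ => simp only [map_add, hx₁, hx₂]
  have key : TensorProduct.map (U.subtype ∘ₗ rU) (V.subtype ∘ₗ rV) w = w := by
    conv_lhs => rw [← hy]
    rw [hstep1, hy, ← hz, hstep2, hz]
  have hmem : w ∈ LinearMap.range (TensorProduct.map U.subtype V.subtype) := by
    refine ⟨TensorProduct.map rU rV w, ?_⟩
    have := congrArg (fun t => t w) (TensorProduct.map_comp U.subtype V.subtype rU rV)
    simp only [LinearMap.comp_apply] at this ⊢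
    rw [← this, key]
  rw [TensorProduct.range_map_eq_span_tmul] at hmem
  refine Submodule.span_mono ?_ hmem
  rintro x ⟨a, b, rfl⟩
  exact ⟨a, a.2, b, b.2, rfl⟩



variable {M' N' : Type} [AddCommGroup M'] [Module k M'] [AddCommGroup N'] [Module k N']

lemma aux_map_map (f : M →ₗ[k] M') (g : N →ₗ[k] N') {M'' N'' : Type} [AddCommGroup M'']
    [Module k M''] [AddCommGroup N''] [Module k N''] (f' : M'' →ₗ[k] M) (g' : N'' →ₗ[k] N)
    (x : M'' ⊗[k] N'') :
    TensorProduct.map f g (TensorProduct.map f' g' x) = TensorProduct.map (f ∘ₗ f') (g ∘ₗ g') x := by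
  induction x using TensorProduct.induction_on with
  | zero => simp
  | tmul a b => simp
  | add a b ha hb => simp only [map_add, ha, hb]

lemma aux_rT_lT (f : M →ₗ[k] M') (g : N →ₗ[k] N') (x : M ⊗[k] N) :
    LinearMap.rTensor N' f (LinearMap.lTensor M g x) = TensorProduct.map f g x := by
  induction x using TensorProduct.induction_on with
  | zero => simp
  | tmul a b => simp
  | add a b ha hb => simp only [map_add, ha, hb]

lemma aux_lT_rT (f : M →ₗ[k] M') (g : N →ₗ[k] N') (x : M ⊗[k] N) :
    LinearMap.lTensor M' g (LinearMap.rTensor N f x) = TensorProduct.map f g x := by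
  induction x using TensorProduct.induction_on with
  | zero => simp
  | tmul a b => simp
  | add a b ha hb => simp only [map_add, ha, hb]

lemma aux_rT_map (f : M' →ₗ[k] Q) (f' : M →ₗ[k] M') (g' : N →ₗ[k] N') (x : M ⊗[k] N) :
    LinearMap.rTensor N' f (TensorProduct.map f' g' x) = TensorProduct.map (f ∘ₗ f') g' x := by
  induction x using TensorProduct.induction_on with
  | zero => simp
  | tmul a b => simp
  | add a b ha hb => simp only [map_add, ha, hb]

lemma aux_lT_map (g : N' →ₗ[k] Q) (f' : M →ₗ[k] M') (g' : N →ₗ[k] N') (x : M ⊗[k] N) :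
    LinearMap.lTensor M' g (TensorProduct.map f' g' x) = TensorProduct.map f' (g ∘ₗ g') x := by
  induction x using TensorProduct.induction_on with
  | zero => simp
  | tmul a b => simp
  | add a b ha hb => simp only [map_add, ha, hb]

lemma aux_map_rT (f : M →ₗ[k] M') (g : N →ₗ[k] N') (f' : Q →ₗ[k] M) (x : Q ⊗[k] N) :
    TensorProduct.map f g (LinearMap.rTensor N f' x) = TensorProduct.map (f ∘ₗ f') g x := by
  induction x using TensorProduct.induction_on with
  | zero => simp
  | tmul a b => simp
  | add a b ha hb => simp only [map_add, ha, hb]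

lemma aux_map_lT (f : M →ₗ[k] M') (g : N →ₗ[k] N') (g' : Q →ₗ[k] N) (x : M ⊗[k] Q) :
    TensorProduct.map f g (LinearMap.lTensor M g' x) = TensorProduct.map f (g ∘ₗ g') x := by
  induction x using TensorProduct.induction_on with
  | zero => simp
  | tmul a b => simp
  | add a b ha hb => simp only [map_add, ha, hb]

lemma aux_rT_rT (f : M →ₗ[k] M') (g : Q →ₗ[k] M) (x : Q ⊗[k] N) :
    LinearMap.rTensor N f (LinearMap.rTensor N g x) = LinearMap.rTensor N (f ∘ₗ g) x := by
  induction x using TensorProduct.induction_on with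
  | zero => simp
  | tmul a b => simp
  | add a b ha hb => simp only [map_add, ha, hb]

lemma aux_lT_lT (f : N →ₗ[k] N') (g : Q →ₗ[k] N) (x : M ⊗[k] Q) :
    LinearMap.lTensor M f (LinearMap.lTensor M g x) = LinearMap.lTensor M (f ∘ₗ g) x := by
  induction x using TensorProduct.induction_on with
  | zero => simp
  | tmul a b => simp
  | add a b ha hb => simp only [map_add, ha, hb]

end AuxLemmas

section PrfDefs

/-- `h ↦ e·h`. -/
noncomputable def aE (act : C ⊗[k] H →ₗ[k] C) (e : C) : H →ₗ[k] C :=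
  act ∘ₗ TensorProduct.mk k C H e

/-- The map whose kernel is `Asub`. -/
noncomputable def Gmap (ρ : P →ₗ[k] P ⊗[k] C) (π : C →ₗ[k] D) (eb : D) :
    P →ₗ[k] P ⊗[k] D :=
  (LinearMap.lTensor P π ∘ₗ ρ) - (TensorProduct.mk k P D).flip eb

/-- The map whose kernel is `Xsub`. -/
noncomputable def gXmap (π : C →ₗ[k] D) (eb : D) : C →ₗ[k] C ⊗[k] D :=
  (LinearMap.lTensor C π ∘ₗ Coalgebra.comul (R := k) (A := C)) -
    (TensorProduct.mk k C D).flip eb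

/-- The second map in `cotenDX`. -/
noncomputable def FkerMap (ρ : P →ₗ[k] P ⊗[k] C) (π : C →ₗ[k] D) :
    P ⊗[k] C →ₗ[k] P ⊗[k] (D ⊗[k] C) :=
  ((TensorProduct.assoc k P D C).toLinearMap ∘ₗ
      LinearMap.rTensor C (LinearMap.lTensor P π ∘ₗ ρ)) -
    LinearMap.lTensor P
      (LinearMap.rTensor C π ∘ₗ Coalgebra.comul (R := k) (A := C))

noncomputable def mYv (actD : D ⊗[k] H →ₗ[k] D) :
    (P ⊗[k] D) ⊗[k] (P ⊗[k] H) →ₗ[k] P ⊗[k] D :=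
  TensorProduct.map (LinearMap.mul' k P) actD ∘ₗ
    (TensorProduct.tensorTensorTensorComm k P D P H).toLinearMap

/-- The right action `◁` of `P` on `P ⊗ D`. -/
noncomputable def mYp (δ : P →ₗ[k] P ⊗[k] H) (actD : D ⊗[k] H →ₗ[k] D) :
    (P ⊗[k] D) ⊗[k] P →ₗ[k] P ⊗[k] D :=
  mYv k H D P actD ∘ₗ LinearMap.lTensor (P ⊗[k] D) δ

noncomputable def foldP {M N : Type} [AddCommGroup M] [Module k M] [AddCommGroup N]
    [Module k N] (f : M →ₗ[k] P ⊗[k] N) : P ⊗[k] M →ₗ[k] P ⊗[k] N :=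
  LinearMap.rTensor N (LinearMap.mul' k P) ∘ₗ
    (TensorProduct.assoc k P P N).symm.toLinearMap ∘ₗ LinearMap.lTensor P f

noncomputable def foldY {M N : Type} [AddCommGroup M] [Module k M] [AddCommGroup N]
    [Module k N] (δ : P →ₗ[k] P ⊗[k] H) (actD : D ⊗[k] H →ₗ[k] D)
    (f : M →ₗ[k] P ⊗[k] N) : (P ⊗[k] D) ⊗[k] M →ₗ[k] (P ⊗[k] D) ⊗[k] N :=
  LinearMap.rTensor N (mYp k H D P δ actD) ∘ₗ
    (TensorProduct.assoc k (P ⊗[k] D) P N).symm.toLinearMap ∘ₗ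
      LinearMap.lTensor (P ⊗[k] D) f

/-- The relations defining `(P ⊗ D) ⊗_B P`. -/
noncomputable def TYspan (δ : P →ₗ[k] P ⊗[k] H) (actD : D ⊗[k] H →ₗ[k] D)
    (ρ : P →ₗ[k] P ⊗[k] C) : Submodule k ((P ⊗[k] D) ⊗[k] P) :=
  Submodule.span k {v | ∃ (y : P ⊗[k] D) (b q : P), b ∈ coinv k C P ρ ∧
    v = (mYp k H D P δ actD) (y ⊗ₜ[k] b) ⊗ₜ[k] q - y ⊗ₜ[k] (b * q)}

lemma canMap_eq_foldP (ρ : P →ₗ[k] P ⊗[k] C) : canMap k C P ρ = foldP k P ρ := rfl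

lemma Asub_eq_ker (ρ : P →ₗ[k] P ⊗[k] C) (π : C →ₗ[k] D) (eb : D) :
    Asub k C D P ρ π eb = LinearMap.ker (Gmap k C D P ρ π eb) := rfl

lemma Xsub_eq_ker (π : C →ₗ[k] D) (eb : D) :
    Xsub k C D π eb = LinearMap.ker (gXmap k C D π eb) := rfl

lemma cotenDX_eq (ρ : P →ₗ[k] P ⊗[k] C) (π : C →ₗ[k] D) (eb : D) :
    cotenDX k C D P ρ π eb =
      LinearMap.range (LinearMap.lTensor P (Xsub k C D π eb).subtype) ⊓
        LinearMap.ker (FkerMap k C D P ρ π) := rfl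

end PrfDefs

section PrfEval

lemma mYv_tmul (actD : D ⊗[k] H →ₗ[k] D) (x : P) (d : D) (a : P) (h : H) :
    mYv k H D P actD ((x ⊗ₜ[k] d) ⊗ₜ[k] (a ⊗ₜ[k] h)) = (x * a) ⊗ₜ[k] actD (d ⊗ₜ[k] h) := by
  simp [mYv, TensorProduct.tensorTensorTensorComm_tmul]

lemma mYp_tmul (δ : P →ₗ[k] P ⊗[k] H) (actD : D ⊗[k] H →ₗ[k] D) (y : P ⊗[k] D) (q : P) :
    mYp k H D P δ actD (y ⊗ₜ[k] q) = mYv k H D P actD (y ⊗ₜ[k] δ q) := by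
  simp [mYp]

lemma foldP_tmul {M N : Type} [AddCommGroup M] [Module k M] [AddCommGroup N] [Module k N]
    (f : M →ₗ[k] P ⊗[k] N) (p : P) (m : M) :
    foldP k P f (p ⊗ₜ[k] m) = LinearMap.rTensor N (LinearMap.mulLeft k p) (f m) := by
  have h1 : LinearMap.mul' k P ∘ₗ TensorProduct.mk k P P p = LinearMap.mulLeft k p := by
    ext r; simp
  simp only [foldP, LinearMap.comp_apply, LinearEquiv.coe_coe, LinearMap.lTensor_tmul,
    aux_assoc_symm_tmul]
  rw [← h1, LinearMap.rTensor_comp, LinearMap.comp_apply]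

lemma foldY_tmul {M N : Type} [AddCommGroup M] [Module k M] [AddCommGroup N] [Module k N]
    (δ : P →ₗ[k] P ⊗[k] H) (actD : D ⊗[k] H →ₗ[k] D)
    (f : M →ₗ[k] P ⊗[k] N) (y : P ⊗[k] D) (m : M) :
    foldY k H D P δ actD f (y ⊗ₜ[k] m) =
      LinearMap.rTensor N (mYp k H D P δ actD ∘ₗ TensorProduct.mk k (P ⊗[k] D) P y) (f m) := by
  simp only [foldY, LinearMap.comp_apply, LinearEquiv.coe_coe, LinearMap.lTensor_tmul,
    aux_assoc_symm_tmul]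
  rw [LinearMap.rTensor_comp, LinearMap.comp_apply]

end PrfEval


section PrfCore

set_option linter.unusedSectionVars false
set_option synthInstance.maxHeartbeats 1000000
set_option maxHeartbeats 1000000

lemma hMY_mul (δ : P →ₗ[k] P ⊗[k] H) (hδmul : ∀ p q : P, δ (p * q) = δ p * δ q)
    (actD : D ⊗[k] H →ₗ[k] D)
    (hactD_mul : ∀ (d : D) (h h' : H),
      actD (actD (d ⊗ₜ[k] h) ⊗ₜ[k] h') = actD (d ⊗ₜ[k] (h * h'))) :
    ∀ (y : P ⊗[k] D) (p p' : P),
      mYp k H D P δ actD (mYp k H D P δ actD (y ⊗ₜ[k] p) ⊗ₜ[k] p') =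
        mYp k H D P δ actD (y ⊗ₜ[k] (p * p')) := by
  have core : ∀ (y : P ⊗[k] D) (u v : P ⊗[k] H),
      mYv k H D P actD (mYv k H D P actD (y ⊗ₜ[k] u) ⊗ₜ[k] v) =
        mYv k H D P actD (y ⊗ₜ[k] (u * v)) := by
    intro y u v
    induction y using TensorProduct.induction_on with
    | zero => simp
    | add y₁ y₂ h₁ h₂ => simp only [add_tmul, map_add, h₁, h₂]
    | tmul x d =>
      induction u using TensorProduct.induction_on with
      | zero => simp
      | add u₁ u₂ h₁ h₂ => simp only [tmul_add, map_add, add_mul, add_tmul, h₁, h₂]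
      | tmul a g =>
        induction v using TensorProduct.induction_on with
        | zero => simp
        | add v₁ v₂ h₁ h₂ => simp only [tmul_add, map_add, mul_add, h₁, h₂]
        | tmul b h =>
          simp only [mYv_tmul, Algebra.TensorProduct.tmul_mul_tmul, mul_assoc, hactD_mul]
  intro y p p'
  rw [mYp_tmul, mYp_tmul, mYp_tmul, hδmul, core]

lemma hMY_one (δ : P →ₗ[k] P ⊗[k] H) (hδone : δ 1 = 1) (actD : D ⊗[k] H →ₗ[k] D)
    (hactD_one : ∀ d : D, actD (d ⊗ₜ[k] (1 : H)) = d) :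
    ∀ y : P ⊗[k] D, mYp k H D P δ actD (y ⊗ₜ[k] (1 : P)) = y := by
  intro y
  rw [mYp_tmul, hδone, Algebra.TensorProduct.one_def]
  induction y using TensorProduct.induction_on with
  | zero => simp
  | add y₁ y₂ h₁ h₂ => simp only [add_tmul, map_add, h₁, h₂]
  | tmul x d => simp [mYv_tmul, hactD_one]

lemma hcan_mulLeft (ρ : P →ₗ[k] P ⊗[k] C) :
    ∀ (p : P) (W : P ⊗[k] P),
      canMap k C P ρ (LinearMap.rTensor P (LinearMap.mulLeft k p) W) =
        LinearMap.rTensor C (LinearMap.mulLeft k p) (canMap k C P ρ W) := by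
  intro p W
  induction W using TensorProduct.induction_on with
  | zero => simp
  | add w₁ w₂ h₁ h₂ => simp only [map_add, h₁, h₂]
  | tmul x y =>
    have hml : LinearMap.mulLeft k (p * x) =
        LinearMap.mulLeft k p ∘ₗ LinearMap.mulLeft k x := by
      ext r; simp [mul_assoc]
    rw [LinearMap.rTensor_tmul, canMap_eq_foldP, foldP_tmul, foldP_tmul,
      LinearMap.mulLeft_apply, hml, LinearMap.rTensor_comp, LinearMap.comp_apply]

lemma h_rho_one (δ : P →ₗ[k] P ⊗[k] H) (hδone : δ 1 = 1) (act : C ⊗[k] H →ₗ[k] C)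
    (hact_one : ∀ c : C, act (c ⊗ₜ[k] (1 : H)) = c) (e : C) (ρ : P →ₗ[k] P ⊗[k] C)
    (hρ : ρ = LinearMap.lTensor P (act ∘ₗ TensorProduct.mk k C H e) ∘ₗ δ) :
    ρ (1 : P) = (1 : P) ⊗ₜ[k] e := by
  rw [hρ, LinearMap.comp_apply, hδone, Algebra.TensorProduct.one_def,
    LinearMap.lTensor_tmul]
  simp [hact_one]

lemma hB_rho (δ : P →ₗ[k] P ⊗[k] H) (hδone : δ 1 = 1) (act : C ⊗[k] H →ₗ[k] C)
    (hact_one : ∀ c : C, act (c ⊗ₜ[k] (1 : H)) = c) (e : C) (ρ : P →ₗ[k] P ⊗[k] C)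
    (hρ : ρ = LinearMap.lTensor P (act ∘ₗ TensorProduct.mk k C H e) ∘ₗ δ) :
    ∀ b ∈ coinv k C P ρ, ρ b = b ⊗ₜ[k] e := by
  intro b hb
  have h1 := hb 1
  rw [mul_one, h_rho_one k H C P δ hδone act hact_one e ρ hρ] at h1
  rw [h1, LinearMap.rTensor_tmul, LinearMap.mulLeft_apply, mul_one]

lemma hLP_b (δ : P →ₗ[k] P ⊗[k] H) (hδone : δ 1 = 1) (act : C ⊗[k] H →ₗ[k] C)
    (hact_one : ∀ c : C, act (c ⊗ₜ[k] (1 : H)) = c) (e : C) (π : C →ₗ[k] D)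
    (ρ : P →ₗ[k] P ⊗[k] C)
    (hρ : ρ = LinearMap.lTensor P (act ∘ₗ TensorProduct.mk k C H e) ∘ₗ δ) :
    ∀ b ∈ coinv k C P ρ, (LinearMap.lTensor P π ∘ₗ ρ) b = b ⊗ₜ[k] π e := by
  intro b hb
  rw [LinearMap.comp_apply, hB_rho k H C P δ hδone act hact_one e ρ hρ b hb,
    LinearMap.lTensor_tmul]

lemma hLP_decomp (δ : P →ₗ[k] P ⊗[k] H) (act : C ⊗[k] H →ₗ[k] C) (e : C) (π : C →ₗ[k] D)
    (ρ : P →ₗ[k] P ⊗[k] C)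
    (hρ : ρ = LinearMap.lTensor P (act ∘ₗ TensorProduct.mk k C H e) ∘ₗ δ) :
    LinearMap.lTensor P π ∘ₗ ρ = LinearMap.lTensor P (π ∘ₗ aE k H C act e) ∘ₗ δ := by
  rw [hρ, ← LinearMap.comp_assoc, ← LinearMap.lTensor_comp]
  rfl

lemma h_uMulD (act : C ⊗[k] H →ₗ[k] C)
    (hact_mul : ∀ (c : C) (h h' : H),
      act (act (c ⊗ₜ[k] h) ⊗ₜ[k] h') = act (c ⊗ₜ[k] (h * h')))
    (actD : D ⊗[k] H →ₗ[k] D) (π : C →ₗ[k] D)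
    (hπH : ∀ (c : C) (h : H), π (act (c ⊗ₜ[k] h)) = actD ((π c) ⊗ₜ[k] h)) (e : C) :
    ∀ (u v : P ⊗[k] H),
      LinearMap.lTensor P (π ∘ₗ aE k H C act e) (u * v) =
        mYv k H D P actD ((LinearMap.lTensor P (π ∘ₗ aE k H C act e) u) ⊗ₜ[k] v) := by
  intro u v
  induction u using TensorProduct.induction_on with
  | zero => simp
  | add u₁ u₂ h₁ h₂ => simp only [add_mul, map_add, add_tmul, h₁, h₂]
  | tmul a g =>
    induction v using TensorProduct.induction_on with
    | zero => simp
    | add v₁ v₂ h₁ h₂ => simp only [mul_add, map_add, tmul_add, h₁, h₂]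
    | tmul b h =>
      simp only [Algebra.TensorProduct.tmul_mul_tmul, LinearMap.lTensor_tmul,
        mYv_tmul, LinearMap.comp_apply, aE, TensorProduct.mk_apply, ← hπH, hact_mul]

lemma h_pEbar (act : C ⊗[k] H →ₗ[k] C) (actD : D ⊗[k] H →ₗ[k] D) (π : C →ₗ[k] D)
    (hπH : ∀ (c : C) (h : H), π (act (c ⊗ₜ[k] h)) = actD ((π c) ⊗ₜ[k] h)) (e : C) :
    ∀ (p : P) (v : P ⊗[k] H),
      mYv k H D P actD ((p ⊗ₜ[k] π e) ⊗ₜ[k] v) =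
        LinearMap.rTensor D (LinearMap.mulLeft k p)
          (LinearMap.lTensor P (π ∘ₗ aE k H C act e) v) := by
  intro p v
  induction v using TensorProduct.induction_on with
  | zero => simp
  | add v₁ v₂ h₁ h₂ => simp only [tmul_add, map_add, h₁, h₂]
  | tmul x h =>
    simp only [mYv_tmul, LinearMap.lTensor_tmul, LinearMap.rTensor_tmul,
      LinearMap.mulLeft_apply, LinearMap.comp_apply, aE, TensorProduct.mk_apply, ← hπH]

lemma hGMb (δ : P →ₗ[k] P ⊗[k] H) (hδmul : ∀ p q : P, δ (p * q) = δ p * δ q)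
    (hδone : δ 1 = 1) (act : C ⊗[k] H →ₗ[k] C)
    (hact_one : ∀ c : C, act (c ⊗ₜ[k] (1 : H)) = c)
    (hact_mul : ∀ (c : C) (h h' : H),
      act (act (c ⊗ₜ[k] h) ⊗ₜ[k] h') = act (c ⊗ₜ[k] (h * h')))
    (actD : D ⊗[k] H →ₗ[k] D) (π : C →ₗ[k] D)
    (hπH : ∀ (c : C) (h : H), π (act (c ⊗ₜ[k] h)) = actD ((π c) ⊗ₜ[k] h)) (e : C)
    (ρ : P →ₗ[k] P ⊗[k] C)
    (hρ : ρ = LinearMap.lTensor P (act ∘ₗ TensorProduct.mk k C H e) ∘ₗ δ) :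
    ∀ b ∈ coinv k C P ρ, ∀ p : P,
      Gmap k C D P ρ π (π e) (p * b) =
        mYp k H D P δ actD ((Gmap k C D P ρ π (π e) p) ⊗ₜ[k] b) := by
  intro b hb p
  have hLPd := hLP_decomp k H C D P δ act e π ρ hρ
  have e1 : (LinearMap.lTensor P π ∘ₗ ρ) (p * b) =
      mYv k H D P actD (((LinearMap.lTensor P π ∘ₗ ρ) p) ⊗ₜ[k] δ b) := by
    rw [hLPd, LinearMap.comp_apply, hδmul,
      h_uMulD k H C D P act hact_mul actD π hπH e, LinearMap.comp_apply]
  have e2 : mYv k H D P actD ((p ⊗ₜ[k] π e) ⊗ₜ[k] δ b) = (p * b) ⊗ₜ[k] π e := by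
    rw [h_pEbar k H C D P act actD π hπH e p (δ b)]
    have hbb : LinearMap.lTensor P (π ∘ₗ aE k H C act e) (δ b) = b ⊗ₜ[k] π e := by
      rw [← LinearMap.comp_apply, ← hLPd]
      exact hLP_b k H C D P δ hδone act hact_one e π ρ hρ b hb
    rw [hbb, LinearMap.rTensor_tmul, LinearMap.mulLeft_apply]
  rw [mYp_tmul]
  simp only [Gmap, LinearMap.sub_apply, LinearMap.comp_apply, TensorProduct.mk_apply,
    LinearMap.flip_apply, sub_tmul, map_sub]
  rw [← LinearMap.comp_apply (LinearMap.lTensor P π) ρ, e1, e2]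
  simp only [LinearMap.comp_apply]

lemma h_tttcE (act : C ⊗[k] H →ₗ[k] C) (e : C) :
    ∀ zz : H ⊗[k] H,
      TensorProduct.map act act
          (TensorProduct.tensorTensorTensorComm k C C H H ((e ⊗ₜ[k] e) ⊗ₜ[k] zz)) =
        TensorProduct.map (aE k H C act e) (aE k H C act e) zz := by
  intro zz
  induction zz using TensorProduct.induction_on with
  | zero => simp
  | add z₁ z₂ h₁ h₂ => simp only [tmul_add, map_add, h₁, h₂]
  | tmul h₁ h₂ =>
    rw [TensorProduct.tensorTensorTensorComm_tmul, TensorProduct.map_tmul,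
      TensorProduct.map_tmul]
    simp [aE]

lemma h_CDelta (act : C ⊗[k] H →ₗ[k] C) (e : C)
    (hact_comul : ∀ (c : C) (h : H),
      Coalgebra.comul (R := k) (act (c ⊗ₜ[k] h)) =
        TensorProduct.map act act
          (TensorProduct.tensorTensorTensorComm k C C H H
            ((Coalgebra.comul (R := k) c) ⊗ₜ[k] (Coalgebra.comul (R := k) h))))
    (he_comul : Coalgebra.comul (R := k) e = e ⊗ₜ[k] e) :
    ∀ h : H,
      Coalgebra.comul (R := k) (aE k H C act e h) =
        TensorProduct.map (aE k H C act e) (aE k H C act e)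
          (Coalgebra.comul (R := k) h) := by
  intro h
  have : aE k H C act e h = act (e ⊗ₜ[k] h) := by simp [aE]
  rw [this, hact_comul, he_comul, h_tttcE]


lemma lemSG (ρ : P →ₗ[k] P ⊗[k] C) (π : C →ₗ[k] D) (eb : D) (σm : P →ₗ[k] P ⊗[k] P)
    (hσcol : ∀ p : P,
      LinearMap.rTensor C σm (ρ p) =
        (TensorProduct.assoc k P P C).symm (LinearMap.lTensor P ρ (σm p))) :
    ∀ q : P,
      LinearMap.lTensor P (Gmap k C D P ρ π eb) (σm q) =
        TensorProduct.assoc k P P D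
          (LinearMap.rTensor D σm (Gmap k C D P ρ π eb q)) := by
  intro q
  have nat2 : ∀ V : (P ⊗[k] P) ⊗[k] C,
      LinearMap.lTensor P (LinearMap.lTensor P π) (TensorProduct.assoc k P P C V) =
        TensorProduct.assoc k P P D (LinearMap.lTensor (P ⊗[k] P) π V) := by
    intro V
    induction V using TensorProduct.induction_on with
    | zero => simp
    | add a b ha hb => simp only [map_add, ha, hb]
    | tmul W c =>
      rw [aux_assoc_tmul, LinearMap.lTensor_tmul, aux_assoc_tmul,
        ← LinearMap.comp_apply, ← LinearMap.lTensor_comp]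
      congr 1
  have hcol' : LinearMap.lTensor P ρ (σm q) =
      TensorProduct.assoc k P P C (LinearMap.rTensor C σm (ρ q)) := by
    rw [hσcol q, LinearEquiv.apply_symm_apply]
  have part1 : LinearMap.lTensor P (LinearMap.lTensor P π ∘ₗ ρ) (σm q) =
      TensorProduct.assoc k P P D
        (LinearMap.rTensor D σm ((LinearMap.lTensor P π ∘ₗ ρ) q)) := by
    rw [LinearMap.lTensor_comp, LinearMap.comp_apply, hcol', nat2]
    congr 1
    rw [LinearMap.comp_apply]
    rw [aux_lT_rT, aux_rT_lT]
  have part2 : LinearMap.lTensor P ((TensorProduct.mk k P D).flip eb) (σm q) =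
      TensorProduct.assoc k P P D
        (LinearMap.rTensor D σm (((TensorProduct.mk k P D).flip eb) q)) := by
    have : ((TensorProduct.mk k P D).flip eb) q = q ⊗ₜ[k] eb := rfl
    rw [this, LinearMap.rTensor_tmul, aux_assoc_tmul]
  have hsub : LinearMap.lTensor P (Gmap k C D P ρ π eb) =
      LinearMap.lTensor P (LinearMap.lTensor P π ∘ₗ ρ) -
        LinearMap.lTensor P ((TensorProduct.mk k P D).flip eb) := by
    ext w; simp [Gmap, tmul_sub]
  rw [hsub, LinearMap.sub_apply, part1, part2, Gmap, LinearMap.sub_apply, map_sub,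
    map_sub]

lemma lemXII (δ : P →ₗ[k] P ⊗[k] H) (hδmul : ∀ p q : P, δ (p * q) = δ p * δ q)
    (hδcoassoc : ∀ p : P,
      TensorProduct.assoc k P H H (LinearMap.rTensor H δ (δ p)) =
        LinearMap.lTensor P (Coalgebra.comul (R := k) (A := H)) (δ p))
    (act : C ⊗[k] H →ₗ[k] C)
    (hact_mul : ∀ (c : C) (h h' : H),
      act (act (c ⊗ₜ[k] h) ⊗ₜ[k] h') = act (c ⊗ₜ[k] (h * h')))
    (hact_comul : ∀ (c : C) (h : H),
      Coalgebra.comul (R := k) (act (c ⊗ₜ[k] h)) =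
        TensorProduct.map act act
          (TensorProduct.tensorTensorTensorComm k C C H H
            ((Coalgebra.comul (R := k) c) ⊗ₜ[k] (Coalgebra.comul (R := k) h))))
    (actD : D ⊗[k] H →ₗ[k] D) (π : C →ₗ[k] D)
    (hπH : ∀ (c : C) (h : H), π (act (c ⊗ₜ[k] h)) = actD ((π c) ⊗ₜ[k] h))
    (e : C) (he_comul : Coalgebra.comul (R := k) e = e ⊗ₜ[k] e)
    (ρ : P →ₗ[k] P ⊗[k] C)
    (hρ : ρ = LinearMap.lTensor P (act ∘ₗ TensorProduct.mk k C H e) ∘ₗ δ) :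
    ∀ w : P ⊗[k] P,
      TensorProduct.assoc k P D C
          (foldY k H D P δ actD ρ
            (LinearMap.rTensor P (Gmap k C D P ρ π (π e)) w)) =
        FkerMap k C D P ρ π (canMap k C P ρ w) := by
  have hLPd := hLP_decomp k H C D P δ act e π ρ hρ
  have hGp : ∀ p : P, Gmap k C D P ρ π (π e) p =
      LinearMap.lTensor P (π ∘ₗ aE k H C act e) (δ p) - p ⊗ₜ[k] π e := by
    intro p
    simp only [Gmap, LinearMap.sub_apply, LinearMap.flip_apply, TensorProduct.mk_apply]
    rw [hLPd, LinearMap.comp_apply]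
  have core : ∀ (p : P) (u : P ⊗[k] H) (z : P ⊗[k] (H ⊗[k] H)),
      TensorProduct.assoc k P D C
          (TensorProduct.map
            (mYv k H D P actD ∘ₗ
              TensorProduct.mk k (P ⊗[k] D) (P ⊗[k] H)
                ((LinearMap.lTensor P (π ∘ₗ aE k H C act e)) u - p ⊗ₜ[k] π e))
            (aE k H C act e) ((TensorProduct.assoc k P H H).symm z)) =
        TensorProduct.assoc k P D C
            (TensorProduct.map
              (LinearMap.lTensor P (π ∘ₗ aE k H C act e) ∘ₗ LinearMap.mulLeft k u)
              (aE k H C act e) ((TensorProduct.assoc k P H H).symm z)) -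
          TensorProduct.map (LinearMap.mulLeft k p)
            (TensorProduct.map (π ∘ₗ aE k H C act e) (aE k H C act e)) z := by
    intro p u z
    induction z using TensorProduct.induction_on with
    | zero => simp
    | add a b ha hb =>
        simp only [map_add, ha, hb]
        abel
    | tmul b zz =>
      induction zz using TensorProduct.induction_on with
      | zero => simp
      | add a' b' ha hb =>
          simp only [tmul_add, map_add, ha, hb]
          abel
      | tmul h₁ h₂ =>
        rw [TensorProduct.assoc_symm_tmul]
        rw [TensorProduct.map_tmul, TensorProduct.map_tmul, TensorProduct.map_tmul]
        rw [LinearMap.comp_apply, TensorProduct.mk_apply, sub_tmul, map_sub]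
        rw [← h_uMulD k H C D P act hact_mul actD π hπH e u (b ⊗ₜ[k] h₁)]
        rw [h_pEbar k H C D P act actD π hπH e p (b ⊗ₜ[k] h₁)]
        rw [LinearMap.comp_apply, LinearMap.mulLeft_apply]
        rw [sub_tmul, map_sub]
        congr 1
  intro w
  induction w using TensorProduct.induction_on with
  | zero => simp
  | add a b ha hb => simp only [map_add, ha, hb]
  | tmul p q =>
    have hvz : LinearMap.rTensor H δ (δ q) =
        (TensorProduct.assoc k P H H).symm
          (LinearMap.lTensor P (Coalgebra.comul (R := k) (A := H)) (δ q)) := by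
      rw [← hδcoassoc q, LinearEquiv.symm_apply_apply]
    have hρq : ρ q = LinearMap.lTensor P (aE k H C act e) (δ q) := by
      rw [hρ]; rfl
    have VMY : ∀ (y : P ⊗[k] D) (v : P ⊗[k] H),
        LinearMap.rTensor C
            (mYp k H D P δ actD ∘ₗ TensorProduct.mk k (P ⊗[k] D) P y)
            (LinearMap.lTensor P (aE k H C act e) v) =
          TensorProduct.map
            (mYv k H D P actD ∘ₗ TensorProduct.mk k (P ⊗[k] D) (P ⊗[k] H) y)
            (aE k H C act e) (LinearMap.rTensor H δ v) := by
      intro y v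
      induction v using TensorProduct.induction_on with
      | zero => simp
      | add a b ha hb => simp only [map_add, ha, hb]
      | tmul b h =>
        rw [LinearMap.lTensor_tmul, LinearMap.rTensor_tmul, LinearMap.rTensor_tmul,
          TensorProduct.map_tmul, LinearMap.comp_apply, LinearMap.comp_apply,
          TensorProduct.mk_apply, TensorProduct.mk_apply, mYp_tmul]
    have lhs_eq : TensorProduct.assoc k P D C
        (foldY k H D P δ actD ρ
          (LinearMap.rTensor P (Gmap k C D P ρ π (π e)) (p ⊗ₜ[k] q))) =
        TensorProduct.assoc k P D C
          (TensorProduct.map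
            (mYv k H D P actD ∘ₗ
              TensorProduct.mk k (P ⊗[k] D) (P ⊗[k] H)
                ((LinearMap.lTensor P (π ∘ₗ aE k H C act e)) (δ p) - p ⊗ₜ[k] π e))
            (aE k H C act e)
            ((TensorProduct.assoc k P H H).symm
              (LinearMap.lTensor P (Coalgebra.comul (R := k) (A := H)) (δ q)))) := by
      rw [LinearMap.rTensor_tmul, foldY_tmul, hρq, VMY, hvz, hGp]
    have hcanpq : canMap k C P ρ (p ⊗ₜ[k] q) =
        TensorProduct.map (LinearMap.mulLeft k p) (aE k H C act e) (δ q) := by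
      rw [canMap_eq_foldP, foldP_tmul, hρq, aux_rT_lT]
    have hF2 : LinearMap.lTensor P
        (LinearMap.rTensor C π ∘ₗ Coalgebra.comul (R := k) (A := C))
        (canMap k C P ρ (p ⊗ₜ[k] q)) =
        TensorProduct.map (LinearMap.mulLeft k p)
          (TensorProduct.map (π ∘ₗ aE k H C act e) (aE k H C act e))
          (LinearMap.lTensor P (Coalgebra.comul (R := k) (A := H)) (δ q)) := by
      rw [hcanpq, aux_lT_map]
      have hgoal : (LinearMap.rTensor C π ∘ₗ Coalgebra.comul (R := k) (A := C)) ∘ₗ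
          aE k H C act e =
          TensorProduct.map (π ∘ₗ aE k H C act e) (aE k H C act e) ∘ₗ
            Coalgebra.comul (R := k) (A := H) := by
        ext h
        simp only [LinearMap.comp_apply]
        rw [h_CDelta k H C act e hact_comul he_comul h, aux_rT_map]
      rw [hgoal, ← aux_map_lT]
    have hF1 : LinearMap.rTensor C (LinearMap.lTensor P π ∘ₗ ρ)
        (canMap k C P ρ (p ⊗ₜ[k] q)) =
        TensorProduct.map
          (LinearMap.lTensor P (π ∘ₗ aE k H C act e) ∘ₗ LinearMap.mulLeft k (δ p))
          (aE k H C act e)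
          ((TensorProduct.assoc k P H H).symm
            (LinearMap.lTensor P (Coalgebra.comul (R := k) (A := H)) (δ q))) := by
      rw [hcanpq, aux_rT_map, hLPd]
      have hdm : δ ∘ₗ LinearMap.mulLeft k p = LinearMap.mulLeft k (δ p) ∘ₗ δ := by
        ext r
        simp [hδmul]
      rw [LinearMap.comp_assoc, hdm, ← LinearMap.comp_assoc, ← hvz, ← aux_map_rT]
    rw [lhs_eq, core, FkerMap, LinearMap.sub_apply, LinearMap.comp_apply,
      LinearEquiv.coe_coe, hF1, hF2]

lemma lemXIII (δ : P →ₗ[k] P ⊗[k] H)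
    (hδcoassoc : ∀ p : P,
      TensorProduct.assoc k P H H (LinearMap.rTensor H δ (δ p)) =
        LinearMap.lTensor P (Coalgebra.comul (R := k) (A := H)) (δ p))
    (act : C ⊗[k] H →ₗ[k] C)
    (hact_comul : ∀ (c : C) (h : H),
      Coalgebra.comul (R := k) (act (c ⊗ₜ[k] h)) =
        TensorProduct.map act act
          (TensorProduct.tensorTensorTensorComm k C C H H
            ((Coalgebra.comul (R := k) c) ⊗ₜ[k] (Coalgebra.comul (R := k) h))))
    (π : C →ₗ[k] D)
    (e : C) (he_comul : Coalgebra.comul (R := k) e = e ⊗ₜ[k] e)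
    (ρ : P →ₗ[k] P ⊗[k] C)
    (hρ : ρ = LinearMap.lTensor P (act ∘ₗ TensorProduct.mk k C H e) ∘ₗ δ) :
    ∀ w : P ⊗[k] P,
      TensorProduct.assoc k P C D
          (LinearMap.rTensor D (canMap k C P ρ)
            ((TensorProduct.assoc k P P D).symm
              (LinearMap.lTensor P (Gmap k C D P ρ π (π e)) w))) =
        LinearMap.lTensor P (gXmap k C D π (π e)) (canMap k C P ρ w) := by
  have hLPd := hLP_decomp k H C D P δ act e π ρ hρ
  intro w
  induction w using TensorProduct.induction_on with
  | zero => simp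
  | add a b ha hb => simp only [map_add, ha, hb]
  | tmul p q =>
    have hρq : ∀ r : P, ρ r = LinearMap.lTensor P (aE k H C act e) (δ r) := by
      intro r; rw [hρ]; rfl
    have hvz : LinearMap.rTensor H δ (δ q) =
        (TensorProduct.assoc k P H H).symm
          (LinearMap.lTensor P (Coalgebra.comul (R := k) (A := H)) (δ q)) := by
      rw [← hδcoassoc q, LinearEquiv.symm_apply_apply]
    have hcm : canMap k C P ρ ∘ₗ TensorProduct.mk k P P p =
        TensorProduct.map (LinearMap.mulLeft k p) (aE k H C act e) ∘ₗ δ := by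
      ext r
      simp only [LinearMap.comp_apply, TensorProduct.mk_apply]
      rw [canMap_eq_foldP, foldP_tmul, hρq r, aux_rT_lT]
    have hcanpq : canMap k C P ρ (p ⊗ₜ[k] q) =
        TensorProduct.map (LinearMap.mulLeft k p) (aE k H C act e) (δ q) := by
      rw [canMap_eq_foldP, foldP_tmul, hρq q, aux_rT_lT]
    have hGq : Gmap k C D P ρ π (π e) q =
        LinearMap.lTensor P (π ∘ₗ aE k H C act e) (δ q) - q ⊗ₜ[k] π e := by
      simp only [Gmap, LinearMap.sub_apply, LinearMap.flip_apply, TensorProduct.mk_apply]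
      rw [hLPd, LinearMap.comp_apply]
    have core13 : ∀ z : P ⊗[k] (H ⊗[k] H),
        TensorProduct.assoc k P C D
            (TensorProduct.map
              (TensorProduct.map (LinearMap.mulLeft k p) (aE k H C act e))
              (π ∘ₗ aE k H C act e) ((TensorProduct.assoc k P H H).symm z)) =
          TensorProduct.map (LinearMap.mulLeft k p)
            (TensorProduct.map (aE k H C act e) (π ∘ₗ aE k H C act e)) z := by
      intro z
      induction z using TensorProduct.induction_on with
      | zero => simp
      | add a b ha hb => simp only [map_add, ha, hb]
      | tmul b zz =>
        induction zz using TensorProduct.induction_on with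
        | zero => simp
        | add a b ha hb => simp only [tmul_add, map_add, ha, hb]
        | tmul h₁ h₂ =>
          rw [TensorProduct.assoc_symm_tmul, TensorProduct.map_tmul,
            TensorProduct.map_tmul, TensorProduct.assoc_tmul, TensorProduct.map_tmul,
            TensorProduct.map_tmul]
    have termA : LinearMap.rTensor D
        (TensorProduct.map (LinearMap.mulLeft k p) (aE k H C act e) ∘ₗ δ)
        (LinearMap.lTensor P (π ∘ₗ aE k H C act e) (δ q)) =
        TensorProduct.map (TensorProduct.map (LinearMap.mulLeft k p) (aE k H C act e))
          (π ∘ₗ aE k H C act e)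
          ((TensorProduct.assoc k P H H).symm
            (LinearMap.lTensor P (Coalgebra.comul (R := k) (A := H)) (δ q))) := by
      rw [LinearMap.rTensor_comp, LinearMap.comp_apply, aux_rT_lT, aux_rT_map,
        ← aux_map_rT, hvz]
    have lhs_eq : TensorProduct.assoc k P C D
        (LinearMap.rTensor D (canMap k C P ρ)
          ((TensorProduct.assoc k P P D).symm
            (LinearMap.lTensor P (Gmap k C D P ρ π (π e)) (p ⊗ₜ[k] q)))) =
        TensorProduct.map (LinearMap.mulLeft k p)
            (TensorProduct.map (aE k H C act e) (π ∘ₗ aE k H C act e))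
            (LinearMap.lTensor P (Coalgebra.comul (R := k) (A := H)) (δ q)) -
          LinearMap.lTensor P ((TensorProduct.mk k C D).flip (π e))
            (TensorProduct.map (LinearMap.mulLeft k p) (aE k H C act e) (δ q)) := by
      rw [LinearMap.lTensor_tmul, hGq, aux_assoc_symm_tmul, aux_rT_rT, hcm, map_sub,
        termA, LinearMap.rTensor_tmul, LinearMap.comp_apply, map_sub, core13,
        aux_assoc_tmul]
    have rhs_eq : LinearMap.lTensor P (gXmap k C D π (π e)) (canMap k C P ρ (p ⊗ₜ[k] q)) =
        TensorProduct.map (LinearMap.mulLeft k p)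
            (TensorProduct.map (aE k H C act e) (π ∘ₗ aE k H C act e))
            (LinearMap.lTensor P (Coalgebra.comul (R := k) (A := H)) (δ q)) -
          LinearMap.lTensor P ((TensorProduct.mk k C D).flip (π e))
            (TensorProduct.map (LinearMap.mulLeft k p) (aE k H C act e) (δ q)) := by
      have hsubX : LinearMap.lTensor P (gXmap k C D π (π e)) =
          LinearMap.lTensor P
              (LinearMap.lTensor C π ∘ₗ Coalgebra.comul (R := k) (A := C)) -
            LinearMap.lTensor P ((TensorProduct.mk k C D).flip (π e)) := by
        ext w'
        simp [gXmap, tmul_sub]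
      have hgX : (LinearMap.lTensor C π ∘ₗ Coalgebra.comul (R := k) (A := C)) ∘ₗ
          aE k H C act e =
          TensorProduct.map (aE k H C act e) (π ∘ₗ aE k H C act e) ∘ₗ
            Coalgebra.comul (R := k) (A := H) := by
        ext h
        simp only [LinearMap.comp_apply]
        rw [h_CDelta k H C act e hact_comul he_comul h, aux_lT_map]
      rw [hcanpq, hsubX, LinearMap.sub_apply]
      congr 1
      rw [aux_lT_map, hgX, ← aux_map_lT]
    rw [lhs_eq, rhs_eq]

end PrfCore

set_option maxHeartbeats 4000000
set_option synthInstance.maxHeartbeats 1000000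
set_option linter.unnecessarySimpa false

/-- for a principal coalgebra `C`-extension of Doi–Koppinen type, the
canonical Galois map restricts to an isomorphism `A ⊗_B A ≅ P □_D X`. -/
theorem stmt15
    (δ : P →ₗ[k] P ⊗[k] H)
    (hδmul : ∀ p q : P, δ (p * q) = δ p * δ q) (hδone : δ 1 = 1)
    (hδcounit : ∀ p : P,
      TensorProduct.rid k P
        (LinearMap.lTensor P (Coalgebra.counit (R := k) (A := H)) (δ p)) = p)
    (hδcoassoc : ∀ p : P,
      TensorProduct.assoc k P H H (LinearMap.rTensor H δ (δ p)) =
        LinearMap.lTensor P (Coalgebra.comul (R := k) (A := H)) (δ p))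
    (act : C ⊗[k] H →ₗ[k] C)
    (hact_one : ∀ c : C, act (c ⊗ₜ[k] (1 : H)) = c)
    (hact_mul : ∀ (c : C) (h h' : H),
      act (act (c ⊗ₜ[k] h) ⊗ₜ[k] h') = act (c ⊗ₜ[k] (h * h')))
    (hact_comul : ∀ (c : C) (h : H),
      Coalgebra.comul (R := k) (act (c ⊗ₜ[k] h)) =
        TensorProduct.map act act
          (TensorProduct.tensorTensorTensorComm k C C H H
            ((Coalgebra.comul (R := k) c) ⊗ₜ[k] (Coalgebra.comul (R := k) h))))
    (hact_counit : ∀ (c : C) (h : H),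
      Coalgebra.counit (R := k) (act (c ⊗ₜ[k] h)) =
        Coalgebra.counit (R := k) c * Coalgebra.counit (R := k) h)
    (Sinv : H →ₗ[k] H)
    (hS1 : ∀ h : H, Sinv (HopfAlgebra.antipode (R := k) h) = h)
    (hS2 : ∀ h : H, HopfAlgebra.antipode (R := k) (Sinv h) = h)
    (actD : D ⊗[k] H →ₗ[k] D)
    (hactD_one : ∀ d : D, actD (d ⊗ₜ[k] (1 : H)) = d)
    (hactD_mul : ∀ (d : D) (h h' : H),
      actD (actD (d ⊗ₜ[k] h) ⊗ₜ[k] h') = actD (d ⊗ₜ[k] (h * h')))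
    (π : C →ₗ[k] D)
    (hπΔ : ∀ c : C,
      Coalgebra.comul (R := k) (π c) = TensorProduct.map π π (Coalgebra.comul c))
    (hπε : ∀ c : C,
      Coalgebra.counit (R := k) (π c) = Coalgebra.counit (R := k) c)
    (hπH : ∀ (c : C) (h : H), π (act (c ⊗ₜ[k] h)) = actD ((π c) ⊗ₜ[k] h))
    (e : C) (he_counit : Coalgebra.counit (R := k) e = 1)
    (he_comul : Coalgebra.comul (R := k) e = e ⊗ₜ[k] e)
    -- the right `C`-coaction `ρ(p) = Σ p₍₀₎ ⊗ e·p₍₁₎`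
    (ρ : P →ₗ[k] P ⊗[k] C)
    (hρ : ρ = LinearMap.lTensor P (act ∘ₗ TensorProduct.mk k C H e) ∘ₗ δ)
    -- the extension `B ⊆ P` is a principal coalgebra extension:
    (hsurj : Function.Surjective (canMap k C P ρ))
    (hker : LinearMap.ker (canMap k C P ρ) = galRel k C P ρ)
    (hproj : ∃ σ : P →ₗ[k] P ⊗[k] P,
      (∀ p : P, LinearMap.mul' k P (σ p) = p) ∧
      (∀ p : P, σ p ∈
        Submodule.span k {w : P ⊗[k] P | ∃ b ∈ coinv k C P ρ, ∃ q : P, w = b ⊗ₜ[k] q}) ∧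
      (∀ b ∈ coinv k C P ρ, ∀ p : P,
        σ (b * p) = LinearMap.rTensor P (LinearMap.mulLeft k b) (σ p)) ∧
      (∀ p : P,
        LinearMap.rTensor C σ (ρ p) =
          (TensorProduct.assoc k P P C).symm (LinearMap.lTensor P ρ (σ p))))
    -- the canonical Galois map is right `P`-linear for the diagonal action on `P ⊗ C`
    (hcanP : ∀ (w : P ⊗[k] P) (r : P),
      canMap k C P ρ (LinearMap.lTensor P (LinearMap.mulRight k r) w) =
        TensorProduct.map (LinearMap.mul' k P) act
          (TensorProduct.tensorTensorTensorComm k P C P H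
            ((canMap k C P ρ w) ⊗ₜ[k] δ r))) :
    Submodule.map (canMap k C P ρ)
        (Submodule.span k {w : P ⊗[k] P | ∃ a ∈ Asub k C D P ρ π (π e),
          ∃ a' ∈ Asub k C D P ρ π (π e), w = a ⊗ₜ[k] a'}) =
      cotenDX k C D P ρ π (π e) ∧
    (∀ w ∈ Submodule.span k {w : P ⊗[k] P | ∃ a ∈ Asub k C D P ρ π (π e),
          ∃ a' ∈ Asub k C D P ρ π (π e), w = a ⊗ₜ[k] a'},
      (canMap k C P ρ w = 0 ↔ w ∈ galRelAA k C D P ρ π (π e))) := by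
  clear hcanP hδcounit hact_counit hπΔ hπε he_counit hS1 hS2 Sinv
  obtain ⟨σm, hσmul, hσspan, hσB, hσcol⟩ := hproj
  obtain ⟨s, hs⟩ := (canMap k C P ρ).exists_rightInverse_of_surjective
    (LinearMap.range_eq_top.mpr hsurj)
  have hMYm := hMY_mul k H D P δ hδmul actD hactD_mul
  have hMYo := hMY_one k H D P δ hδone actD hactD_one
  -- the chosen linear section of `can`, as `τ' = s(1 ⊗ -)`
  have hτ : ∀ c : C, canMap k C P ρ ((s ∘ₗ TensorProduct.mk k P C 1) c) =
      (1 : P) ⊗ₜ[k] c := by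
    intro c
    have h0 := LinearMap.ext_iff.mp hs ((1 : P) ⊗ₜ[k] c)
    simpa using h0
  have hcan1 : ∀ q : P, canMap k C P ρ ((1 : P) ⊗ₜ[k] q) = ρ q := by
    intro q
    rw [canMap_eq_foldP, foldP_tmul]
    have h1 : LinearMap.mulLeft k (1 : P) = LinearMap.id := by ext r; simp
    rw [h1]
    simp
  have hζcan : ∀ z : P ⊗[k] C,
      canMap k C P ρ (foldP k P (s ∘ₗ TensorProduct.mk k P C 1) z) = z := by
    intro z
    induction z using TensorProduct.induction_on with
    | zero => simp
    | add a b ha hb => simp only [map_add, ha, hb]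
    | tmul p c =>
      rw [foldP_tmul, hcan_mulLeft k C P ρ p, hτ c, LinearMap.rTensor_tmul,
        LinearMap.mulLeft_apply, mul_one]
  have hThT : ∀ t ∈ galRel k C P ρ, foldP k P σm t = 0 := by
    intro t ht
    induction ht using Submodule.span_induction with
    | mem x hx =>
      obtain ⟨p, q, b, hb, rfl⟩ := hx
      rw [map_sub, foldP_tmul, foldP_tmul, hσB b hb q, aux_rT_rT]
      have h1 : LinearMap.mulLeft k (p * b) =
          LinearMap.mulLeft k p ∘ₗ LinearMap.mulLeft k b := by ext r; simp [mul_assoc]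
      rw [h1, sub_self]
    | zero => simp
    | add x y _ _ hx hy => simp only [map_add, hx, hy, add_zero]
    | smul a x _ hx => simp only [map_smul, hx, smul_zero]
  have hThmod : ∀ w : P ⊗[k] P, foldP k P σm w - w ∈ galRel k C P ρ := by
    have claim : ∀ (p : P), ∀ z ∈ Submodule.span k
        {w : P ⊗[k] P | ∃ b ∈ coinv k C P ρ, ∃ q : P, w = b ⊗ₜ[k] q},
        LinearMap.rTensor P (LinearMap.mulLeft k p) z -
          p ⊗ₜ[k] (LinearMap.mul' k P z) ∈ galRel k C P ρ := by
      intro p z hz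
      induction hz using Submodule.span_induction with
      | mem x hx =>
        obtain ⟨b, hb, q', rfl⟩ := hx
        rw [LinearMap.rTensor_tmul, LinearMap.mulLeft_apply, LinearMap.mul'_apply]
        exact Submodule.subset_span ⟨p, q', b, hb, rfl⟩
      | zero => simp
      | add x y _ _ hx hy =>
        have := Submodule.add_mem _ hx hy
        simpa only [map_add, tmul_add, add_sub_add_comm] using this
      | smul a x _ hx =>
        have := Submodule.smul_mem _ a hx
        simpa only [map_smul, tmul_smul, smul_sub] using this
    intro w
    induction w using TensorProduct.induction_on with
    | zero => simpa using Submodule.zero_mem _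
    | add a b ha hb =>
      have := Submodule.add_mem _ ha hb
      simpa only [map_add, add_sub_add_comm] using this
    | tmul p q =>
      have h1 := claim p (σm q) (hσspan q)
      rw [hσmul q] at h1
      rw [foldP_tmul]
      exact h1
  have hcanTh : ∀ w : P ⊗[k] P,
      canMap k C P ρ (foldP k P σm w) = canMap k C P ρ w := by
    intro w
    have h1 := hThmod w
    rw [← hker] at h1
    have h2 := LinearMap.mem_ker.mp h1
    rw [map_sub] at h2
    exact sub_eq_zero.mp h2
  -- `coinv` as a submodule
  let Bsub : Submodule k P :=
    { carrier := coinv k C P ρ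
      add_mem' := by
        intro b₁ b₂ h₁ h₂ p
        have e1 : LinearMap.mulLeft k (b₁ + b₂) =
            LinearMap.mulLeft k b₁ + LinearMap.mulLeft k b₂ := by ext r; simp [add_mul]
        rw [add_mul, map_add, h₁ p, h₂ p, e1, LinearMap.rTensor_add,
          LinearMap.add_apply]
      zero_mem' := by
        intro p
        have e1 : LinearMap.mulLeft k (0 : P) = 0 := by ext r; simp
        rw [zero_mul, map_zero, e1, LinearMap.rTensor_zero, LinearMap.zero_apply]
      smul_mem' := by
        intro a b hb p
        have e1 : LinearMap.mulLeft k (a • b) = a • LinearMap.mulLeft k b := by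
          ext r; simp [smul_mul_assoc]
        rw [smul_mul_assoc, map_smul, hb p, e1, LinearMap.rTensor_smul,
          LinearMap.smul_apply] }
  have hσA : ∀ a ∈ Asub k C D P ρ π (π e), σm a ∈ Submodule.span k
      {w : P ⊗[k] P | ∃ b ∈ coinv k C P ρ, ∃ r ∈ Asub k C D P ρ π (π e),
        w = b ⊗ₜ[k] r} := by
    intro a ha
    have h1 : σm a ∈ LinearMap.range (LinearMap.rTensor P Bsub.subtype) := by
      refine Submodule.span_le.mpr ?_ (hσspan a)
      rintro w ⟨b, hb, q, rfl⟩
      exact ⟨(⟨b, hb⟩ : Bsub) ⊗ₜ[k] q, by simp⟩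
    have h2 : σm a ∈ LinearMap.range
        (LinearMap.lTensor P (Asub k C D P ρ π (π e)).subtype) := by
      rw [Asub_eq_ker, ← aux_ker_lTensor]
      refine LinearMap.mem_ker.mpr ?_
      rw [lemSG k C D P ρ π (π e) σm hσcol a]
      have hGa : Gmap k C D P ρ π (π e) a = 0 := by
        have := ha
        rw [Asub_eq_ker] at this
        exact LinearMap.mem_ker.mp this
      rw [hGa]
      simp
    have h3 := aux_inter Bsub (Asub k C D P ρ π (π e)) h1 h2
    refine Submodule.span_mono ?_ h3
    rintro x ⟨b, hb, r, hr, rfl⟩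
    exact ⟨b, hb, r, hr, rfl⟩
  have hThAA : ∀ w ∈ Submodule.span k {w : P ⊗[k] P | ∃ a ∈ Asub k C D P ρ π (π e),
      ∃ a' ∈ Asub k C D P ρ π (π e), w = a ⊗ₜ[k] a'},
      foldP k P σm w - w ∈ galRelAA k C D P ρ π (π e) := by
    have claim : ∀ a ∈ Asub k C D P ρ π (π e), ∀ z ∈ Submodule.span k
        {w : P ⊗[k] P | ∃ b ∈ coinv k C P ρ, ∃ r ∈ Asub k C D P ρ π (π e),
          w = b ⊗ₜ[k] r},
        LinearMap.rTensor P (LinearMap.mulLeft k a) z -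
          a ⊗ₜ[k] (LinearMap.mul' k P z) ∈ galRelAA k C D P ρ π (π e) := by
      intro a ha z hz
      induction hz using Submodule.span_induction with
      | mem x hx =>
        obtain ⟨b, hb, r, hr, rfl⟩ := hx
        rw [LinearMap.rTensor_tmul, LinearMap.mulLeft_apply, LinearMap.mul'_apply]
        exact Submodule.subset_span ⟨a, ha, b, hb, r, hr, rfl⟩
      | zero => simp
      | add x y _ _ hx hy =>
        have := Submodule.add_mem _ hx hy
        simpa only [map_add, tmul_add, add_sub_add_comm] using this
      | smul c x _ hx =>
        have := Submodule.smul_mem _ c hx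
        simpa only [map_smul, tmul_smul, smul_sub] using this
    intro w hw
    induction hw using Submodule.span_induction with
    | mem x hx =>
      obtain ⟨a, ha, a', ha', rfl⟩ := hx
      have h1 := claim a ha (σm a') (hσA a' ha')
      rw [hσmul a'] at h1
      rw [foldP_tmul]
      exact h1
    | zero => simpa using Submodule.zero_mem _
    | add x y _ _ hx hy =>
      have := Submodule.add_mem _ hx hy
      simpa only [map_add, add_sub_add_comm] using this
    | smul c x _ hx =>
      have := Submodule.smul_mem _ c hx
      simpa only [map_smul, smul_sub] using this
  -- part 2
  have hAAle : galRelAA k C D P ρ π (π e) ≤ galRel k C P ρ := by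
    refine Submodule.span_le.mpr ?_
    rintro w ⟨a, _, b, hb, a', _, rfl⟩
    exact Submodule.subset_span ⟨a, a', b, hb, rfl⟩
  have part2 : ∀ w ∈ Submodule.span k {w : P ⊗[k] P | ∃ a ∈ Asub k C D P ρ π (π e),
      ∃ a' ∈ Asub k C D P ρ π (π e), w = a ⊗ₜ[k] a'},
      (canMap k C P ρ w = 0 ↔ w ∈ galRelAA k C D P ρ π (π e)) := by
    intro w hw
    constructor
    · intro h0
      have hT : w ∈ galRel k C P ρ := by
        rw [← hker]
        exact LinearMap.mem_ker.mpr h0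
      have h1 := hThT w hT
      have h2 := hThAA w hw
      rw [h1, zero_sub] at h2
      have h3 := Submodule.neg_mem _ h2
      simpa using h3
    · intro hAA
      have hT : w ∈ LinearMap.ker (canMap k C P ρ) := by
        rw [hker]
        exact hAAle hAA
      exact LinearMap.mem_ker.mp hT
  -- part 1, ⊆
  have hsub1 : Submodule.map (canMap k C P ρ)
      (Submodule.span k {w : P ⊗[k] P | ∃ a ∈ Asub k C D P ρ π (π e),
        ∃ a' ∈ Asub k C D P ρ π (π e), w = a ⊗ₜ[k] a'}) ≤
      cotenDX k C D P ρ π (π e) := by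
    rw [Submodule.map_span]
    refine Submodule.span_le.mpr ?_
    rintro v ⟨w, ⟨a, ha, a', ha', rfl⟩, rfl⟩
    have hGa : Gmap k C D P ρ π (π e) a = 0 := by
      have := ha; rw [Asub_eq_ker] at this; exact LinearMap.mem_ker.mp this
    have hGa' : Gmap k C D P ρ π (π e) a' = 0 := by
      have := ha'; rw [Asub_eq_ker] at this; exact LinearMap.mem_ker.mp this
    rw [cotenDX_eq]
    refine Submodule.mem_inf.mpr ⟨?_, ?_⟩
    · rw [Xsub_eq_ker, ← aux_ker_lTensor]
      refine LinearMap.mem_ker.mpr ?_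
      have h13 := lemXIII k H C D P δ hδcoassoc act hact_comul π e he_comul ρ hρ
        (a ⊗ₜ[k] a')
      rw [LinearMap.lTensor_tmul, hGa', tmul_zero] at h13
      rw [← h13]
      simp
    · refine LinearMap.mem_ker.mpr ?_
      have h12 := lemXII k H C D P δ hδmul hδcoassoc act hact_mul hact_comul actD π
        hπH e he_comul ρ hρ (a ⊗ₜ[k] a')
      rw [LinearMap.rTensor_tmul, hGa, zero_tmul, map_zero] at h12
      rw [← h12]
      simp
  -- descent for `(P ⊗ D) ⊗_B P`
  have haa : ∀ (y : P ⊗[k] D), ∀ t ∈ galRel k C P ρ,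
      LinearMap.rTensor P
          (mYp k H D P δ actD ∘ₗ TensorProduct.mk k (P ⊗[k] D) P y) t ∈
        TYspan k H C D P δ actD ρ := by
    intro y t ht
    induction ht using Submodule.span_induction with
    | mem x hx =>
      obtain ⟨p, q, b, hb, rfl⟩ := hx
      rw [map_sub, LinearMap.rTensor_tmul, LinearMap.rTensor_tmul,
        LinearMap.comp_apply, LinearMap.comp_apply, TensorProduct.mk_apply,
        TensorProduct.mk_apply, ← hMYm y p b]
      exact Submodule.subset_span ⟨mYp k H D P δ actD (y ⊗ₜ[k] p), b, q, hb, rfl⟩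
    | zero => simp
    | add x y' _ _ hx hy => simpa only [map_add] using Submodule.add_mem _ hx hy
    | smul a x _ hx => simpa only [map_smul] using Submodule.smul_mem _ a hx
  have hclaim1 : ∀ (y : P ⊗[k] D) (z : P ⊗[k] C),
      foldY k H D P δ actD (s ∘ₗ TensorProduct.mk k P C 1)
          (LinearMap.rTensor C
            (mYp k H D P δ actD ∘ₗ TensorProduct.mk k (P ⊗[k] D) P y) z) =
        LinearMap.rTensor P
          (mYp k H D P δ actD ∘ₗ TensorProduct.mk k (P ⊗[k] D) P y)
          (foldP k P (s ∘ₗ TensorProduct.mk k P C 1) z) := by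
    intro y z
    induction z using TensorProduct.induction_on with
    | zero => simp
    | add a b ha hb => simp only [map_add, ha, hb]
    | tmul p c =>
      rw [LinearMap.rTensor_tmul, foldY_tmul, foldP_tmul, aux_rT_rT,
        LinearMap.comp_apply, TensorProduct.mk_apply]
      congr 1
      ext r
      simp [hMYm y p r]
  have hRid : ∀ v : (P ⊗[k] D) ⊗[k] P,
      foldY k H D P δ actD (s ∘ₗ TensorProduct.mk k P C 1)
          (foldY k H D P δ actD ρ v) - v ∈ TYspan k H C D P δ actD ρ := by
    intro v
    induction v using TensorProduct.induction_on with
    | zero => simpa using Submodule.zero_mem _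
    | add a b ha hb =>
      have := Submodule.add_mem _ ha hb
      simp only [map_add]
      convert this using 1
      exact add_sub_add_comm (α := (P ⊗[k] D) ⊗[k] P) _ _ _ _
    | tmul y q =>
      rw [foldY_tmul, hclaim1]
      have e2 : y ⊗ₜ[k] q = LinearMap.rTensor P
          (mYp k H D P δ actD ∘ₗ TensorProduct.mk k (P ⊗[k] D) P y)
          ((1 : P) ⊗ₜ[k] q) := by
        rw [LinearMap.rTensor_tmul, LinearMap.comp_apply, TensorProduct.mk_apply,
          hMYo y]
      rw [e2]
      refine Eq.mpr (congrArg (· ∈ TYspan k H C D P δ actD ρ) (map_sub (LinearMap.rTensor P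
        (mYp k H D P δ actD ∘ₗ TensorProduct.mk k (P ⊗[k] D) P y))
        (foldP k P (s ∘ₗ TensorProduct.mk k P C 1) (ρ q)) ((1 : P) ⊗ₜ[k] q)).symm) ?_
      refine haa y _ ?_
      rw [← hker]
      refine LinearMap.mem_ker.mpr ?_
      rw [map_sub, hζcan (ρ q), hcan1 q, sub_self]
  have hkerY : ∀ v : (P ⊗[k] D) ⊗[k] P,
      foldY k H D P δ actD ρ v = 0 → v ∈ TYspan k H C D P δ actD ρ := by
    intro v hv
    have h1 := hRid v
    rw [hv, map_zero] at h1
    have h2 := Submodule.neg_mem (M := (P ⊗[k] D) ⊗[k] P) _ h1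
    have h3 : v = -(0 - v) := by
      exact ((neg_sub (α := (P ⊗[k] D) ⊗[k] P) 0 v).trans
        (sub_zero (G := (P ⊗[k] D) ⊗[k] P) v)).symm
    rw [h3]
    exact h2
  have hThY0 : ∀ v ∈ TYspan k H C D P δ actD ρ, foldY k H D P δ actD σm v = 0 := by
    intro v hv
    induction hv using Submodule.span_induction with
    | mem x hx =>
      obtain ⟨y, b, q, hb, rfl⟩ := hx
      rw [map_sub, foldY_tmul, foldY_tmul, hσB b hb q, aux_rT_rT]
      have h1 : mYp k H D P δ actD ∘ₗ
          TensorProduct.mk k (P ⊗[k] D) P (mYp k H D P δ actD (y ⊗ₜ[k] b)) =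
          (mYp k H D P δ actD ∘ₗ TensorProduct.mk k (P ⊗[k] D) P y) ∘ₗ
            LinearMap.mulLeft k b := by
        ext r
        simp [hMYm y b r]
      rw [h1, sub_self]
    | zero => simp
    | add x y _ _ hx hy => simp only [map_add, hx, hy, add_zero]
    | smul a x _ hx => simp only [map_smul, hx, smul_zero]
  have hTGr : ∀ w : P ⊗[k] P,
      LinearMap.rTensor P (Gmap k C D P ρ π (π e)) (foldP k P σm w) =
        foldY k H D P δ actD σm
          (LinearMap.rTensor P (Gmap k C D P ρ π (π e)) w) := by
    intro w
    induction w using TensorProduct.induction_on with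
    | zero => simp
    | add a b ha hb => simp only [map_add, ha, hb]
    | tmul p q =>
      rw [foldP_tmul, aux_rT_rT, LinearMap.rTensor_tmul, foldY_tmul]
      have hz : ∀ z ∈ Submodule.span k
          {w : P ⊗[k] P | ∃ b ∈ coinv k C P ρ, ∃ q' : P, w = b ⊗ₜ[k] q'},
          LinearMap.rTensor P (Gmap k C D P ρ π (π e) ∘ₗ LinearMap.mulLeft k p) z =
            LinearMap.rTensor P (mYp k H D P δ actD ∘ₗ
              TensorProduct.mk k (P ⊗[k] D) P (Gmap k C D P ρ π (π e) p)) z := by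
        intro z hz
        induction hz using Submodule.span_induction with
        | mem x hx =>
          obtain ⟨b, hb, q', rfl⟩ := hx
          rw [LinearMap.rTensor_tmul, LinearMap.rTensor_tmul]
          congr 1
          rw [LinearMap.comp_apply, LinearMap.comp_apply, TensorProduct.mk_apply,
            LinearMap.mulLeft_apply]
          exact hGMb k H C D P δ hδmul hδone act hact_one hact_mul actD π hπH e ρ hρ
            b hb p
        | zero => simp
        | add x y _ _ hx hy => simp only [map_add, hx, hy]
        | smul a x _ hx => simp only [map_smul, hx]
      exact hz (σm q) (hσspan q)
  have hTGl : ∀ w : P ⊗[k] P,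
      LinearMap.lTensor P (Gmap k C D P ρ π (π e)) (foldP k P σm w) =
        TensorProduct.assoc k P P D
          (LinearMap.rTensor D (foldP k P σm)
            ((TensorProduct.assoc k P P D).symm
              (LinearMap.lTensor P (Gmap k C D P ρ π (π e)) w))) := by
    intro w
    induction w using TensorProduct.induction_on with
    | zero => simp
    | add a b ha hb => simp only [map_add, ha, hb]
    | tmul p q =>
      have nat1 : ∀ W : (P ⊗[k] P) ⊗[k] D,
          LinearMap.rTensor (P ⊗[k] D) (LinearMap.mulLeft k p)
              (TensorProduct.assoc k P P D W) =
            TensorProduct.assoc k P P D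
              (LinearMap.rTensor D (LinearMap.rTensor P (LinearMap.mulLeft k p)) W) := by
        intro W
        induction W using TensorProduct.induction_on with
        | zero => simp
        | add a b ha hb => simp only [map_add, ha, hb]
        | tmul W' d =>
          rw [aux_assoc_tmul, aux_rT_lT, LinearMap.rTensor_tmul, aux_assoc_tmul,
            aux_lT_rT]
      have hcomp : foldP k P σm ∘ₗ TensorProduct.mk k P P p =
          LinearMap.rTensor P (LinearMap.mulLeft k p) ∘ₗ σm := by
        ext r
        simp only [LinearMap.comp_apply, TensorProduct.mk_apply]
        rw [foldP_tmul]
      have lhs1 : LinearMap.lTensor P (Gmap k C D P ρ π (π e))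
          (foldP k P σm (p ⊗ₜ[k] q)) =
          TensorProduct.assoc k P P D
            (LinearMap.rTensor D (LinearMap.rTensor P (LinearMap.mulLeft k p))
              (LinearMap.rTensor D σm (Gmap k C D P ρ π (π e) q))) := by
        rw [foldP_tmul, aux_lT_rT, ← aux_rT_lT,
          lemSG k C D P ρ π (π e) σm hσcol q, nat1]
      have rhs1 : TensorProduct.assoc k P P D
          (LinearMap.rTensor D (foldP k P σm)
            ((TensorProduct.assoc k P P D).symm
              (LinearMap.lTensor P (Gmap k C D P ρ π (π e)) (p ⊗ₜ[k] q)))) =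
          TensorProduct.assoc k P P D
            (LinearMap.rTensor D (LinearMap.rTensor P (LinearMap.mulLeft k p))
              (LinearMap.rTensor D σm (Gmap k C D P ρ π (π e) q))) := by
        rw [LinearMap.lTensor_tmul, aux_assoc_symm_tmul, aux_rT_rT, hcomp,
          LinearMap.rTensor_comp, LinearMap.comp_apply]
      rw [lhs1, rhs1]
  -- part 1, ⊇
  have hsup : cotenDX k C D P ρ π (π e) ≤ Submodule.map (canMap k C P ρ)
      (Submodule.span k {w : P ⊗[k] P | ∃ a ∈ Asub k C D P ρ π (π e),
        ∃ a' ∈ Asub k C D P ρ π (π e), w = a ⊗ₜ[k] a'}) := by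
    intro u hu
    rw [cotenDX_eq] at hu
    obtain ⟨hu1, hu2⟩ := Submodule.mem_inf.mp hu
    have hcanw1 : canMap k C P ρ (foldP k P (s ∘ₗ TensorProduct.mk k P C 1) u) = u :=
      hζcan u
    have hXu : LinearMap.lTensor P (gXmap k C D π (π e)) u = 0 := by
      obtain ⟨u0, rfl⟩ := hu1
      rw [aux_lT_lT]
      have h0 : gXmap k C D π (π e) ∘ₗ (Xsub k C D π (π e)).subtype = 0 := by
        ext x
        simpa [gXmap] using LinearMap.mem_ker.mp x.2
      rw [h0]
      simp
    have hFu : FkerMap k C D P ρ π u = 0 := LinearMap.mem_ker.mp hu2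
    have hlTzero : LinearMap.lTensor P (Gmap k C D P ρ π (π e))
        (foldP k P σm (foldP k P (s ∘ₗ TensorProduct.mk k P C 1) u)) = 0 := by
      have h13 := lemXIII k H C D P δ hδcoassoc act hact_comul π e he_comul ρ hρ
        (foldP k P (s ∘ₗ TensorProduct.mk k P C 1) u)
      rw [hcanw1, hXu] at h13
      have h13' := (LinearEquiv.map_eq_zero_iff (TensorProduct.assoc k P C D)).mp h13
      have hkD : LinearMap.ker (LinearMap.rTensor D (canMap k C P ρ)) =
          LinearMap.range (LinearMap.rTensor D (galRel k C P ρ).subtype) := by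
        rw [aux_ker_rTensor, hker]
      have hmem : (TensorProduct.assoc k P P D).symm
          (LinearMap.lTensor P (Gmap k C D P ρ π (π e))
            (foldP k P (s ∘ₗ TensorProduct.mk k P C 1) u)) ∈
          LinearMap.range (LinearMap.rTensor D (galRel k C P ρ).subtype) := by
        rw [← hkD]
        exact LinearMap.mem_ker.mpr h13'
      obtain ⟨V0, hV0⟩ := hmem
      rw [hTGl, ← hV0, aux_rT_rT]
      have hz : foldP k P σm ∘ₗ (galRel k C P ρ).subtype = 0 := by
        ext t
        simpa using hThT t.1 t.2
      rw [hz]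
      simp
    have hrTzero : LinearMap.rTensor P (Gmap k C D P ρ π (π e))
        (foldP k P σm (foldP k P (s ∘ₗ TensorProduct.mk k P C 1) u)) = 0 := by
      rw [hTGr]
      refine hThY0 _ ?_
      refine hkerY _ ?_
      have h12 := lemXII k H C D P δ hδmul hδcoassoc act hact_mul hact_comul actD π
        hπH e he_comul ρ hρ (foldP k P (s ∘ₗ TensorProduct.mk k P C 1) u)
      rw [hcanw1, hFu] at h12
      exact (LinearEquiv.map_eq_zero_iff (TensorProduct.assoc k P D C)).mp h12
    have hwA : foldP k P σm (foldP k P (s ∘ₗ TensorProduct.mk k P C 1) u) ∈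
        Submodule.span k {w : P ⊗[k] P | ∃ a ∈ Asub k C D P ρ π (π e),
          ∃ a' ∈ Asub k C D P ρ π (π e), w = a ⊗ₜ[k] a'} := by
      refine aux_inter (Asub k C D P ρ π (π e)) (Asub k C D P ρ π (π e)) ?_ ?_
      · rw [Asub_eq_ker, ← aux_ker_rTensor]
        exact LinearMap.mem_ker.mpr hrTzero
      · rw [Asub_eq_ker, ← aux_ker_lTensor]
        exact LinearMap.mem_ker.mpr hlTzero
    refine Submodule.mem_map.mpr
      ⟨foldP k P σm (foldP k P (s ∘ₗ TensorProduct.mk k P C 1) u), hwA, ?_⟩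
    rw [hcanTh, hcanw1]
  exact ⟨le_antisymm hsub1 hsup, part2⟩
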